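/- Let p be an odd prime, e ≥ 2, and χ a Dirichlet character modulo p^e with conductor p^s where s ≤ e/2 and e > max{s,1}. Then there exists a Dirichlet character ψ modulo p^e such that χψ² is minimal and ord_p(cond(ψ)) + ord_p(cond(χψ)) ≤ e. -/

import Mathlib

open DirichletCharacter

/-- If a Dirichlet character mod `p^e` factors through `p^s₁`, then the `p`-adic valuation of
its conductor is at most `s₁`. -/
private lemma padicVal_conductor_le {p e s₁ : ℕ} (hp : p.Prime) [Fact p.Prime]
    (ψ : DirichletCharacter ℂ (p ^ e)) (h : ψ.FactorsThrough (p ^ s₁)) :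
    padicValNat p ψ.conductor ≤ s₁ := by
  have hle : ψ.conductor ≤ p ^ s₁ := Nat.sInf_le h
  obtain ⟨j, hje, hj⟩ := (Nat.dvd_prime_pow hp).mp (conductor_dvd_level ψ)
  rw [hj, padicValNat.prime_pow]
  exact (Nat.pow_le_pow_iff_right hp.one_lt).mp (hj ▸ hle)

/-- A character mod `p^e` killed by a power of two factors through level `p`. -/
private lemma exists_level_p (p e K : ℕ) (hp : p.Prime) (hp2 : p ≠ 2) (he : e ≠ 0)
    (χ' : DirichletCharacter ℂ (p ^ e)) (hK : χ' ^ 2 ^ K = 1) :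
    ∃ χ₀ : DirichletCharacter ℂ p,
      χ' = changeLevel (dvd_pow_self p he) χ₀ ∧ χ₀ ^ 2 ^ K = 1 := by
  haveI : Fact p.Prime := ⟨hp⟩
  haveI : NeZero (p ^ e) := ⟨pow_ne_zero e hp.pos.ne'⟩
  set f := ZMod.unitsMap (dvd_pow_self p he) with hf
  have hsurj : Function.Surjective f := ZMod.unitsMap_surjective _
  have hcards : Nat.card (ZMod (p ^ e))ˣ = Nat.card f.ker * (p - 1) := by
    rw [Subgroup.card_eq_card_quotient_mul_card_subgroup f.ker,
      Nat.card_congr (QuotientGroup.quotientKerEquivOfSurjective f hsurj).toEquiv,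
      Nat.card_eq_fintype_card, ZMod.card_units_eq_totient, Nat.totient_prime hp, mul_comm]
  have hG : Nat.card (ZMod (p ^ e))ˣ = p ^ (e - 1) * (p - 1) := by
    rw [Nat.card_eq_fintype_card, ZMod.card_units_eq_totient,
      Nat.totient_prime_pow hp (Nat.pos_of_ne_zero he)]
  have hp1 : 0 < p - 1 := by have := hp.two_le; omega
  have hker : Nat.card f.ker = p ^ (e - 1) := by
    apply Nat.eq_of_mul_eq_mul_right hp1
    rw [← hcards, hG]
  have hker_le : f.ker ≤ χ'.toUnitHom.ker := by
    intro x hx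
    have hxpow : x ^ p ^ (e - 1) = 1 := by
      have h1 : (⟨x, hx⟩ : f.ker) ^ Nat.card f.ker = 1 := pow_card_eq_one'
      rw [hker] at h1
      have := congrArg (Subgroup.subtype f.ker) h1
      simpa using this
    rw [MonoidHom.mem_ker]
    have h2 : (χ'.toUnitHom x) ^ p ^ (e - 1) = 1 := by
      rw [← map_pow, hxpow, map_one]
    have h3 : (χ'.toUnitHom x) ^ 2 ^ K = 1 := by
      apply Units.ext
      rw [Units.val_pow_eq_pow_val, Units.val_one, MulChar.coe_toUnitHom,
        ← MulChar.pow_apply' χ' (pow_ne_zero K two_ne_zero), hK, MulChar.one_apply_coe]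
    have hd2 := orderOf_dvd_of_pow_eq_one h2
    have hd3 := orderOf_dvd_of_pow_eq_one h3
    have hcop : Nat.Coprime (2 ^ K) (p ^ (e - 1)) :=
      Nat.Coprime.pow K (e - 1) ((Nat.coprime_primes Nat.prime_two hp).mpr (Ne.symm hp2))
    have hone : orderOf (χ'.toUnitHom x) = 1 :=
      Nat.dvd_one.mp (hcop ▸ Nat.dvd_gcd hd3 hd2)
    exact orderOf_eq_one_iff.mp hone
  have hFT := (factorsThrough_iff_ker_unitsMap (χ := χ') (dvd_pow_self p he)).mpr hker_le
  obtain ⟨hd, χ₀, hχ₀⟩ := hFT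
  refine ⟨χ₀, hχ₀, ?_⟩
  apply changeLevel_injective (dvd_pow_self p he)
  rw [map_pow, ← hχ₀, hK, map_one]

/-- Structure of characters mod `p` killed by a power of 2: they are either squares or
have order exactly `2 ^ v₂(p-1)`. -/
private lemma dual_structure (p : ℕ) (hp : p.Prime) (hp2 : p ≠ 2) (K : ℕ)
    (χ₀ : DirichletCharacter ℂ p) (hK : χ₀ ^ 2 ^ K = 1) :
    (∃ ξ : DirichletCharacter ℂ p, χ₀ = ξ ^ 2) ∨
      orderOf χ₀ = 2 ^ padicValNat 2 (p - 1) := by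
  haveI : Fact p.Prime := ⟨hp⟩
  haveI : NeZero p := ⟨hp.ne_zero⟩
  haveI : NeZero (Monoid.exponent (ZMod p)ˣ) := ⟨Monoid.exponent_ne_zero_of_finite⟩
  haveI : NeZero ((Monoid.exponent (ZMod p)ˣ : ℂ)) :=
    ⟨Nat.cast_ne_zero.mpr Monoid.exponent_ne_zero_of_finite⟩
  obtain ⟨E⟩ := DirichletCharacter.mulEquiv_units ℂ p
  haveI : IsCyclic (DirichletCharacter ℂ p) :=
    isCyclic_of_surjective E.symm.toMonoidHom E.symm.surjective
  have hcard : Nat.card (DirichletCharacter ℂ p) = p - 1 := by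
    rw [card_eq_totient_of_hasEnoughRootsOfUnity, Nat.totient_prime hp]
  obtain ⟨Φ, hΦ⟩ := IsCyclic.exists_generator (α := DirichletCharacter ℂ p)
  have hordΦ : orderOf Φ = p - 1 := by
    rw [orderOf_eq_card_of_forall_mem_zpowers hΦ, hcard]
  have hp1 : p - 1 ≠ 0 := by have := hp.two_le; omega
  set v := (p - 1).factorization 2 with hv
  set q := (p - 1) / 2 ^ v with hq
  have hqv : 2 ^ v * q = p - 1 := Nat.ordProj_mul_ordCompl_eq_self (p - 1) 2
  have hq_odd : ¬ 2 ∣ q := Nat.not_dvd_ordCompl Nat.prime_two hp1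
  have hq0 : q ≠ 0 := by intro h; rw [h, mul_zero] at hqv; omega
  obtain ⟨i, hi⟩ := (Submonoid.mem_powers_iff _ _).mp
    (mem_powers_iff_mem_zpowers.mpr (hΦ χ₀))
  have hdvd : (p - 1) ∣ i * 2 ^ K := by
    rw [← hordΦ]
    apply orderOf_dvd_of_pow_eq_one
    rw [pow_mul, hi, hK]
  have hq_i : q ∣ i := by
    have h1 : q ∣ i * 2 ^ K := dvd_trans (Dvd.intro_left _ hqv) hdvd
    have hcop : Nat.Coprime q (2 ^ K) :=
      Nat.Coprime.pow_right K ((Nat.Prime.coprime_iff_not_dvd Nat.prime_two).mpr hq_odd).symm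
    exact hcop.dvd_of_dvd_mul_right h1
  obtain ⟨c, hc⟩ := hq_i
  set θ := Φ ^ q with hθ
  have hχ₀θ : χ₀ = θ ^ c := by rw [hθ, ← pow_mul, ← hc, hi]
  rcases Nat.even_or_odd c with hce | hco
  · left
    obtain ⟨c', rfl⟩ := hce
    exact ⟨θ ^ c', by rw [hχ₀θ, pow_add, ← pow_two]⟩
  · right
    have hordθ : orderOf θ = 2 ^ v := by
      rw [hθ, orderOf_pow, hordΦ, Nat.gcd_eq_right (Dvd.intro_left _ hqv), ← hqv,
        Nat.mul_div_cancel _ (Nat.pos_of_ne_zero hq0)]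
    have hcop : (orderOf θ).Coprime c := by
      rw [hordθ]
      exact Nat.Coprime.pow_left v
        ((Nat.Prime.coprime_iff_not_dvd Nat.prime_two).mpr
          (by have := Nat.odd_iff.mp hco; omega))
    rw [hχ₀θ, hcop.orderOf_pow, hordθ, hv, Nat.factorization_def _ Nat.prime_two]

/-- A Dirichlet character `χ` modulo `p^e` (`p` an odd prime) of conductor `p^s` is
*minimal* if `s ∈ {0, e}` or `χ` has order `2^{ord₂(p-1)}`. -/
def IsMinimalOdd (p e : ℕ) (χ : DirichletCharacter ℂ (p ^ e)) : Prop :=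
  padicValNat p χ.conductor = 0 ∨ padicValNat p χ.conductor = e ∨
    orderOf χ = 2 ^ (padicValNat 2 (p - 1))

/-- Let `p` be an odd prime, `e ≥ 2`, and `χ` a Dirichlet character
modulo `p^e` with conductor `p^s` where `2s ≤ e` and `e > max{s, 1}`. Then there exists a
Dirichlet character `ψ` modulo `p^e` such that `χψ²` is minimal and
`ord_p(cond ψ) + ord_p(cond(χψ)) ≤ e`. -/
theorem exists_twist_to_minimal_odd (p : ℕ) (hp : p.Prime) (hp2 : p ≠ 2)
    (e s : ℕ) (he : 2 ≤ e) (χ : DirichletCharacter ℂ (p ^ e))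
    (hcond : χ.conductor = p ^ s) (hs : 2 * s ≤ e) (he' : max s 1 < e) :
    ∃ ψ : DirichletCharacter ℂ (p ^ e),
      IsMinimalOdd p e (χ * ψ ^ 2) ∧
        padicValNat p ψ.conductor + padicValNat p (χ * ψ).conductor ≤ e := by
  haveI : Fact p.Prime := ⟨hp⟩
  haveI : NeZero (p ^ e) := ⟨pow_ne_zero e hp.pos.ne'⟩
  have hene : e ≠ 0 := by omega
  set d := orderOf χ with hd
  have hd0 : d ≠ 0 := (MulChar.orderOf_pos χ).ne'
  set K := d.factorization 2 with hK
  set m := d / 2 ^ K with hm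
  have hmd : 2 ^ K * m = d := Nat.ordProj_mul_ordCompl_eq_self d 2
  have hm_odd : m % 2 = 1 := by
    have h2 : ¬ 2 ∣ m := Nat.not_dvd_ordCompl Nat.prime_two hd0
    omega
  obtain ⟨t, ht⟩ : ∃ t, m = 2 * t + 1 := ⟨m / 2, by omega⟩
  have hpowm : ∀ x : DirichletCharacter ℂ (p ^ e), x * (x ^ t) ^ 2 = x ^ m := by
    intro x
    rw [← pow_mul, Nat.mul_comm t 2, ht, pow_succ']
  have hχFT : χ.FactorsThrough (p ^ s) := hcond ▸ factorsThrough_conductor χ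
  obtain ⟨hse, χs, hχs⟩ := hχFT
  set s₁ := max s 1 with hs₁
  have hs₁e : s₁ ≤ e := he'.le
  have hsE : p ^ s₁ ∣ p ^ e := pow_dvd_pow p hs₁e
  have hss₁ : p ^ s ∣ p ^ s₁ := pow_dvd_pow p (le_max_left s 1)
  have hps₁ : p ∣ p ^ s₁ := dvd_pow_self p (by omega)
  set β : DirichletCharacter ℂ (p ^ s₁) := changeLevel hss₁ χs with hβdef
  have hβ : changeLevel hsE β = χ := by
    rw [hβdef, ← changeLevel_trans _ hss₁ hsE]
    exact hχs.symm
  suffices h : ∃ Ψ₁ : DirichletCharacter ℂ (p ^ s₁),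
      IsMinimalOdd p e (χ * (changeLevel hsE Ψ₁) ^ 2) by
    obtain ⟨Ψ₁, hmin⟩ := h
    refine ⟨changeLevel hsE Ψ₁, hmin, ?_⟩
    have b1 : padicValNat p (changeLevel hsE Ψ₁).conductor ≤ s₁ :=
      padicVal_conductor_le hp _ ⟨hsE, Ψ₁, rfl⟩
    have b2 : padicValNat p (χ * changeLevel hsE Ψ₁).conductor ≤ s₁ :=
      padicVal_conductor_le hp _ ⟨hsE, β * Ψ₁, by rw [map_mul, hβ]⟩
    omega
  set χ' := χ ^ m with hχ'
  have hχ'K : χ' ^ 2 ^ K = 1 := by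
    rw [hχ', ← pow_mul, Nat.mul_comm, hmd]
    exact pow_orderOf_eq_one χ
  have hmin_one : ∀ ψ' : DirichletCharacter ℂ (p ^ e),
      χ * ψ' ^ 2 = 1 → IsMinimalOdd p e (χ * ψ' ^ 2) := by
    intro ψ' h1
    left
    rw [h1, conductor_one, padicValNat.one]
  by_cases hA : χ' = 1
  · refine ⟨β ^ t, hmin_one _ ?_⟩
    rw [map_pow, hβ, hpowm, ← hχ', hA]
  · obtain ⟨χ₀, hχ₀, hχ₀K⟩ := exists_level_p p e K hp hp2 hene χ' hχ'K
    have hcl : ∀ x : DirichletCharacter ℂ p,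
        changeLevel hsE (changeLevel hps₁ x) = changeLevel (dvd_pow_self p hene) x :=
      fun x => (changeLevel_trans _ hps₁ hsE).symm
    rcases dual_structure p hp hp2 K χ₀ hχ₀K with ⟨ξ, hξ⟩ | hord
    · refine ⟨β ^ t * (changeLevel hps₁ ξ)⁻¹, hmin_one _ ?_⟩
      have h2 : χ' = (changeLevel (dvd_pow_self p hene) ξ) ^ 2 := by
        rw [hχ₀, hξ, map_pow]
      rw [map_mul, map_pow, map_inv, hβ, hcl, mul_pow, inv_pow, ← mul_assoc, hpowm,
        ← hχ', h2, mul_inv_cancel]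
    · refine ⟨β ^ t, ?_⟩
      right; right
      have heq : χ * (changeLevel hsE (β ^ t)) ^ 2 = χ' := by
        rw [map_pow, hβ, hpowm, ← hχ']
      rw [heq, hχ₀,
        orderOf_injective (changeLevel (dvd_pow_self p hene))
          (changeLevel_injective (dvd_pow_self p hene)) χ₀, hord]
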